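/- Let G be a 3-partite undirected graph with parts A = {a₁,…,aₙ}, B = {b₁,…,bₙ}, C = {c₁,…,cₙ} and edge set E (every edge of G joins vertices from two different parts). Construct a labeled digraph H over the alphabet {α₁, α₂} with vertex set A ∪ B ∪ C ∪ A' ∪ {u, v}, where A' = {a₁',…,aₙ'} and u, v are fresh, and with the following labeled edges: (u, a₁) and (a_i, a_{i+1}) for 1 ≤ i ≤ n−1, each labeled α₁; (a_i, b_j) labeled α₂ for every edge {a_i, b_j} ∈ E; (b_i, c_j) labeled α₂ for every edge {b_i, c_j} ∈ E; (c_i, a_j') labeled α₂ for every edge {c_i, a_j} ∈ E; and (a_{i+1}', a_i') for 1 ≤ i ≤ n−1 and (a₁', v), each labeled α₁. Then there is a walk from u to v in H whose label is a palindrome if and only if G contains a triangle, i.e. there exist i, j, l such that {a_i, b_j}, {b_j, c_l}, {c_l, a_i} are all edges of G. -/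

import Mathlib

/-- The alphabet {α₁, α₂}. -/
inductive Alpha where
  | a1 : Alpha
  | a2 : Alpha
deriving DecidableEq

/-- A labeled walk in a `σ`-labeled digraph given by the edge relation `E`. -/
inductive LWalk {V σ : Type*} (E : V → σ → V → Prop) : V → List σ → V → Prop
  | nil (v : V) : LWalk E v [] v
  | cons {u v w : V} {c : σ} {l : List σ} :
      E u c v → LWalk E v l w → LWalk E u (c :: l) w

/-- Vertices of the constructed graph `H`: the copies `A`, `B`, `C` of the parts,
the fresh copies `A' = {a₁',…,aₙ'}`, and the fresh vertices `u` and `v`. -/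
inductive Vtx (n : ℕ) where
  | vA : Fin n → Vtx n
  | vB : Fin n → Vtx n
  | vC : Fin n → Vtx n
  | vA' : Fin n → Vtx n
  | vu : Vtx n
  | vv : Vtx n

/-- The labeled edges of `H`, where the tripartite graph `G` is given by the relations
`EAB`, `EBC`, `ECA` describing its edges between the respective parts
(vertices are 0-indexed, so `a₁` is `Vtx.vA ⟨0, _⟩`). -/
def triEdge {n : ℕ} (EAB EBC ECA : Fin n → Fin n → Prop) :
    Vtx n → Alpha → Vtx n → Prop := fun x c y =>
  (c = Alpha.a1 ∧
    ((∃ h : 0 < n, x = Vtx.vu ∧ y = Vtx.vA ⟨0, h⟩) ∨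
     (∃ (i : ℕ) (h : i + 1 < n), x = Vtx.vA ⟨i, by omega⟩ ∧ y = Vtx.vA ⟨i + 1, h⟩) ∨
     (∃ (i : ℕ) (h : i + 1 < n), x = Vtx.vA' ⟨i + 1, h⟩ ∧ y = Vtx.vA' ⟨i, by omega⟩) ∨
     (∃ h : 0 < n, x = Vtx.vA' ⟨0, h⟩ ∧ y = Vtx.vv))) ∨
  (c = Alpha.a2 ∧
    ((∃ i j : Fin n, EAB i j ∧ x = Vtx.vA i ∧ y = Vtx.vB j) ∨
     (∃ i j : Fin n, EBC i j ∧ x = Vtx.vB i ∧ y = Vtx.vC j) ∨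
     (∃ i j : Fin n, ECA i j ∧ x = Vtx.vC i ∧ y = Vtx.vA' j)))

theorem LWalk.append' {V σ : Type*} {E : V → σ → V → Prop} {x y z : V} {w1 w2 : List σ}
    (h1 : LWalk E x w1 y) : LWalk E y w2 z → LWalk E x (w1 ++ w2) z := by
  induction h1 with
  | nil v => exact fun h => h
  | cons e _ ih => exact fun h => LWalk.cons e (ih h)

/-- Characterization of labels of walks ending at `vv`. -/
def Spec {n : ℕ} (EAB EBC ECA : Fin n → Fin n → Prop) : Vtx n → List Alpha → Prop
  | Vtx.vv, w => w = []
  | Vtx.vA' k, w => w = List.replicate ((k : ℕ) + 1) Alpha.a1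
  | Vtx.vC l, w => ∃ k : Fin n, ECA l k ∧ w = Alpha.a2 :: List.replicate ((k : ℕ) + 1) Alpha.a1
  | Vtx.vB j, w => ∃ l k : Fin n, EBC j l ∧ ECA l k ∧
      w = Alpha.a2 :: Alpha.a2 :: List.replicate ((k : ℕ) + 1) Alpha.a1
  | Vtx.vA i, w => ∃ (m : ℕ) (j l k : Fin n) (h : (i : ℕ) + m < n),
      EAB ⟨(i : ℕ) + m, h⟩ j ∧ EBC j l ∧ ECA l k ∧
      w = List.replicate m Alpha.a1 ++
        Alpha.a2 :: Alpha.a2 :: Alpha.a2 :: List.replicate ((k : ℕ) + 1) Alpha.a1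
  | Vtx.vu, w => ∃ (m : ℕ) (j l k : Fin n) (h : m < n),
      EAB ⟨m, h⟩ j ∧ EBC j l ∧ ECA l k ∧
      w = List.replicate (m + 1) Alpha.a1 ++
        Alpha.a2 :: Alpha.a2 :: Alpha.a2 :: List.replicate ((k : ℕ) + 1) Alpha.a1

theorem spec_of_walk {n : ℕ} {EAB EBC ECA : Fin n → Fin n → Prop} {x z : Vtx n}
    {w : List Alpha} (hw : LWalk (triEdge EAB EBC ECA) x w z) (hz : z = Vtx.vv) :
    Spec EAB EBC ECA x w := by
  induction hw with
  | nil v => subst hz; simp [Spec]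
  | @cons x y z c l e hwalk ih =>
    have hS := ih hz
    rcases e with ⟨rfl, e⟩ | ⟨rfl, e⟩
    · rcases e with ⟨h0, rfl, rfl⟩ | ⟨i, hi, rfl, rfl⟩ | ⟨i, hi, rfl, rfl⟩ | ⟨h0, rfl, rfl⟩
      · -- u → a₁
        obtain ⟨m, j, l', k, h, h1, h2, h3, rfl⟩ := hS
        exact ⟨m, j, l', k, by simpa using h, by simpa using h1, h2, h3, rfl⟩
      · -- aᵢ → aᵢ₊₁
        obtain ⟨m, j, l', k, h, h1, h2, h3, rfl⟩ := hS
        have h' : i + (m + 1) < n := by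
          have hh : i + 1 + m < n := h
          omega
        refine ⟨m + 1, j, l', k, h', ?_, h2, h3, rfl⟩
        have hfin : (⟨i + (m + 1), h'⟩ : Fin n) =
            ⟨((⟨i + 1, hi⟩ : Fin n) : ℕ) + m, h⟩ :=
          Fin.ext (show i + (m + 1) = i + 1 + m by omega)
        exact hfin.symm ▸ h1
      · -- a'ᵢ₊₁ → a'ᵢ
        simp only [Spec] at hS ⊢
        subst hS
        simp [List.replicate_succ]
      · -- a'₁ → v
        simp only [Spec] at hS ⊢
        subst hS
        simp [List.replicate_succ]
    · rcases e with ⟨i, j, hij, rfl, rfl⟩ | ⟨i, j, hij, rfl, rfl⟩ | ⟨i, j, hij, rfl, rfl⟩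
      · -- aᵢ → bⱼ
        obtain ⟨l', k, h2, h3, rfl⟩ := hS
        refine ⟨0, j, l', k, by simpa using i.2, ?_, h2, h3, rfl⟩
        convert hij using 2
        simp
      · -- bᵢ → cⱼ
        obtain ⟨k, h3, rfl⟩ := hS
        exact ⟨j, k, hij, h3, rfl⟩
      · -- cᵢ → a'ⱼ
        simp only [Spec] at hS
        subst hS
        exact ⟨j, hij, rfl⟩

theorem walk_up {n : ℕ} {EAB EBC ECA : Fin n → Fin n → Prop} :
    ∀ (m p : ℕ) (h : p + m < n),
      LWalk (triEdge EAB EBC ECA) (Vtx.vA ⟨p, by omega⟩)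
        (List.replicate m Alpha.a1) (Vtx.vA ⟨p + m, h⟩) := by
  intro m
  induction m with
  | zero => intro p h; exact LWalk.nil _
  | succ m ih =>
    intro p h
    have e : triEdge EAB EBC ECA (Vtx.vA ⟨p, by omega⟩) Alpha.a1
        (Vtx.vA ⟨p + 1, by omega⟩) :=
      Or.inl ⟨rfl, Or.inr (Or.inl ⟨p, by omega, rfl, rfl⟩)⟩
    have h' : (p + 1) + m < n := by omega
    have := LWalk.cons e (ih (p + 1) h')
    rw [← List.replicate_succ] at this
    convert this using 3
    · omega
  termination_by m => m

theorem walk_down {n : ℕ} {EAB EBC ECA : Fin n → Fin n → Prop} :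
    ∀ (m : ℕ) (h : m < n),
      LWalk (triEdge EAB EBC ECA) (Vtx.vA' ⟨m, h⟩)
        (List.replicate (m + 1) Alpha.a1) Vtx.vv := by
  intro m
  induction m with
  | zero =>
    intro h
    exact LWalk.cons (Or.inl ⟨rfl, Or.inr (Or.inr (Or.inr ⟨h, rfl, rfl⟩))⟩) (LWalk.nil _)
  | succ m ih =>
    intro h
    have e : triEdge EAB EBC ECA (Vtx.vA' ⟨m + 1, h⟩) Alpha.a1
        (Vtx.vA' ⟨m, by omega⟩) :=
      Or.inl ⟨rfl, Or.inr (Or.inr (Or.inl ⟨m, h, rfl, rfl⟩))⟩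
    have := LWalk.cons e (ih (by omega))
    rwa [← List.replicate_succ] at this

theorem replicate_a1_inj : ∀ (m k : ℕ) (r1 r2 : List Alpha),
    List.replicate m Alpha.a1 ++ Alpha.a2 :: r1 =
      List.replicate k Alpha.a1 ++ Alpha.a2 :: r2 → m = k := by
  intro m
  induction m with
  | zero =>
    intro k r1 r2 h
    cases k with
    | zero => rfl
    | succ k => simp [List.replicate_succ] at h
  | succ m ih =>
    intro k r1 r2 h
    cases k with
    | zero => simp [List.replicate_succ] at h
    | succ k =>
      simp only [List.replicate_succ, List.cons_append, List.cons.injEq] at h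
      exact congrArg Nat.succ (ih k r1 r2 h.2)

/-- There is a walk from `u` to `v` in `H` whose label is a palindrome iff `G` has a
triangle. -/
theorem stmt8 {n : ℕ} (hn : 0 < n) (EAB EBC ECA : Fin n → Fin n → Prop) :
    (∃ w : List Alpha, w.reverse = w ∧
        LWalk (triEdge EAB EBC ECA) Vtx.vu w Vtx.vv) ↔
      ∃ i j l : Fin n, EAB i j ∧ EBC j l ∧ ECA l i := by
  constructor
  · rintro ⟨w, hpal, hw⟩
    obtain ⟨m, j, l, k, h, h1, h2, h3, rfl⟩ := spec_of_walk hw rfl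
    -- compute the reverse
    have hrev : (List.replicate (m + 1) Alpha.a1 ++
        Alpha.a2 :: Alpha.a2 :: Alpha.a2 ::
          List.replicate ((k : ℕ) + 1) Alpha.a1).reverse =
        List.replicate ((k : ℕ) + 1) Alpha.a1 ++
          Alpha.a2 :: Alpha.a2 :: Alpha.a2 :: List.replicate (m + 1) Alpha.a1 := by
      simp [List.reverse_append, List.reverse_cons, List.reverse_replicate,
        List.append_assoc]
    rw [hrev] at hpal
    have hmk : (k : ℕ) + 1 = m + 1 :=
      replicate_a1_inj _ _ _ _ hpal
    have hk : k = ⟨m, h⟩ := Fin.ext (show (k : ℕ) = m by omega)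
    exact ⟨⟨m, h⟩, j, l, h1, h2, hk ▸ h3⟩
  · rintro ⟨i, j, l, h1, h2, h3⟩
    refine ⟨List.replicate ((i : ℕ) + 1) Alpha.a1 ++
      Alpha.a2 :: Alpha.a2 :: Alpha.a2 :: List.replicate ((i : ℕ) + 1) Alpha.a1, ?_, ?_⟩
    · simp [List.reverse_append, List.reverse_cons, List.reverse_replicate,
        List.append_assoc]
    · have eu : triEdge EAB EBC ECA Vtx.vu Alpha.a1 (Vtx.vA ⟨0, hn⟩) :=
        Or.inl ⟨rfl, Or.inl ⟨hn, rfl, rfl⟩⟩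
      have hup : LWalk (triEdge EAB EBC ECA) (Vtx.vA ⟨0, hn⟩)
          (List.replicate (i : ℕ) Alpha.a1) (Vtx.vA i) := by
        have := walk_up (EAB := EAB) (EBC := EBC) (ECA := ECA) (i : ℕ) 0 (by omega)
        convert this using 2 <;> exact Fin.ext (by simp)
      have eab : triEdge EAB EBC ECA (Vtx.vA i) Alpha.a2 (Vtx.vB j) :=
        Or.inr ⟨rfl, Or.inl ⟨i, j, h1, rfl, rfl⟩⟩
      have ebc : triEdge EAB EBC ECA (Vtx.vB j) Alpha.a2 (Vtx.vC l) :=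
        Or.inr ⟨rfl, Or.inr (Or.inl ⟨j, l, h2, rfl, rfl⟩)⟩
      have eca : triEdge EAB EBC ECA (Vtx.vC l) Alpha.a2 (Vtx.vA' i) :=
        Or.inr ⟨rfl, Or.inr (Or.inr ⟨l, i, h3, rfl, rfl⟩)⟩
      have hdown : LWalk (triEdge EAB EBC ECA) (Vtx.vA' i)
          (List.replicate ((i : ℕ) + 1) Alpha.a1) Vtx.vv := by
        have := walk_down (EAB := EAB) (EBC := EBC) (ECA := ECA) (i : ℕ) i.2
        convert this using 2
      have tail : LWalk (triEdge EAB EBC ECA) (Vtx.vA i)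
          (Alpha.a2 :: Alpha.a2 :: Alpha.a2 :: List.replicate ((i : ℕ) + 1) Alpha.a1)
          Vtx.vv :=
        LWalk.cons eab (LWalk.cons ebc (LWalk.cons eca hdown))
      have full := LWalk.cons eu (hup.append' tail)
      rw [← List.cons_append, ← List.replicate_succ] at full
      exact full
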